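/- Let ρ > 0, s > 0, and let p be a real polynomial. Suppose h : [s, ∞) → ℝ satisfies h(t) ≤ t^{−ρ}·p(ln t) for all t ≥ s, and Q : [s, ∞) → ℝ is differentiable with Q'(t) ≤ −(ρ/t)·Q(t) + (ρ/t)·h(t) for all t ≥ s. Then there exists a real polynomial q with deg q ≤ deg p + 1 such that Q(t) ≤ t^{−ρ}·q(ln t) for all t ≥ s. -/
import Mathlib

open Polynomial

lemma exists_antideriv (p : Polynomial ℝ) :
    ∃ P : Polynomial ℝ, P.derivative = p ∧ P.natDegree ≤ p.natDegree + 1 := by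
  refine ⟨p.sum (fun n a => C (a / (n + 1)) * X ^ (n + 1)), ?_, ?_⟩
  · rw [Polynomial.sum, map_sum]
    conv_rhs => rw [← Polynomial.sum_C_mul_X_pow_eq p, Polynomial.sum]
    refine Finset.sum_congr rfl fun n _ => ?_
    rw [derivative_C_mul_X_pow, Nat.add_sub_cancel]
    congr 1
    rw [Nat.cast_add, Nat.cast_one]
    field_simp
  · rw [Polynomial.sum]
    refine natDegree_sum_le_of_forall_le _ _ fun n hn => ?_
    refine (natDegree_C_mul_le _ _).trans ?_
    simpa using Nat.succ_le_succ (Polynomial.le_natDegree_of_mem_supp n hn)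

theorem stmt_12 (ρ s : ℝ) (hρ : 0 < ρ) (hs : 0 < s)
    (p : Polynomial ℝ) (h Q : ℝ → ℝ)
    (hh : ∀ t, s ≤ t → h t ≤ t ^ (-ρ) * p.eval (Real.log t))
    (hdiff : ∀ t, s ≤ t → DifferentiableAt ℝ Q t)
    (hderiv : ∀ t, s ≤ t → deriv Q t ≤ -(ρ / t) * Q t + (ρ / t) * h t) :
    ∃ q : Polynomial ℝ, q.natDegree ≤ p.natDegree + 1 ∧
      ∀ t, s ≤ t → Q t ≤ t ^ (-ρ) * q.eval (Real.log t) := by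
  obtain ⟨P, hPd, hPdeg⟩ := exists_antideriv p
  set c : ℝ := s ^ ρ * Q s - ρ * P.eval (Real.log s) with hc
  set G : ℝ → ℝ := fun u => u ^ ρ * Q u - ρ * P.eval (Real.log u) with hG
  have hGderiv : ∀ t, s ≤ t → HasDerivAt G
      (ρ * t ^ (ρ - 1) * Q t + t ^ ρ * deriv Q t - ρ * (p.eval (Real.log t) * t⁻¹)) t := by
    intro t ht
    have ht0 : 0 < t := hs.trans_le ht
    have h1 : HasDerivAt (fun u : ℝ => u ^ ρ) (ρ * t ^ (ρ - 1)) t :=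
      Real.hasDerivAt_rpow_const (Or.inl ht0.ne')
    have h2 : HasDerivAt Q (deriv Q t) t := (hdiff t ht).hasDerivAt
    have h3 : HasDerivAt (fun u : ℝ => P.eval (Real.log u))
        (P.derivative.eval (Real.log t) * t⁻¹) t :=
      (P.hasDerivAt (Real.log t)).comp t (Real.hasDerivAt_log ht0.ne')
    rw [hPd] at h3
    exact (h1.mul h2).sub (h3.const_mul ρ)
  have hGanti : AntitoneOn G (Set.Ici s) := by
    refine antitoneOn_of_deriv_nonpos (convex_Ici s)
      (fun t ht => ((hGderiv t ht).differentiableAt.continuousAt).continuousWithinAt)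
      (fun t ht => ((hGderiv t (le_of_lt (by simpa using ht))).differentiableAt).differentiableWithinAt)
      (fun t ht => ?_)
    rw [interior_Ici] at ht
    have hts : s ≤ t := le_of_lt ht
    have ht0 : 0 < t := hs.trans_le hts
    rw [(hGderiv t hts).deriv]
    have hb := hderiv t hts
    have hhb := hh t hts
    have htρ : (0:ℝ) < t ^ ρ := Real.rpow_pos_of_pos ht0 ρ
    have hcancel : t ^ ρ * t ^ (-ρ) = 1 := by
      rw [← Real.rpow_add ht0]; simp
    have hρ1 : t ^ (ρ - 1) = t ^ ρ * t⁻¹ := by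
      rw [Real.rpow_sub ht0, Real.rpow_one, div_eq_mul_inv]
    have step1 : t ^ ρ * deriv Q t ≤ t ^ ρ * (-(ρ / t) * Q t + (ρ / t) * h t) :=
      mul_le_mul_of_nonneg_left hb htρ.le
    have step2 : t ^ ρ * (ρ / t) * h t ≤ t ^ ρ * (ρ / t) * (t ^ (-ρ) * p.eval (Real.log t)) := by
      have : 0 < t ^ ρ * (ρ / t) := mul_pos htρ (div_pos hρ ht0)
      exact mul_le_mul_of_nonneg_left hhb this.le
    have key : t ^ ρ * (ρ / t) * (t ^ (-ρ) * p.eval (Real.log t))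
        = ρ * (p.eval (Real.log t) * t⁻¹) := by
      rw [div_eq_mul_inv]
      calc t ^ ρ * (ρ * t⁻¹) * (t ^ (-ρ) * p.eval (Real.log t))
          = t ^ ρ * t ^ (-ρ) * (ρ * (p.eval (Real.log t) * t⁻¹)) := by ring
        _ = ρ * (p.eval (Real.log t) * t⁻¹) := by rw [hcancel, one_mul]
    have e1 : t ^ ρ * (-(ρ / t) * Q t + (ρ / t) * h t)
        = -(ρ * t ^ (ρ - 1) * Q t) + t ^ ρ * (ρ / t) * h t := by
      rw [hρ1, div_eq_mul_inv]; ring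
    linarith [step1, step2, key, e1]
  refine ⟨ρ • P + C c, ?_, ?_⟩
  · refine (natDegree_add_le _ _).trans ?_
    simp only [natDegree_C, max_le_iff]
    exact ⟨(natDegree_smul_le _ _).trans hPdeg, Nat.zero_le _⟩
  · intro t ht
    have ht0 : 0 < t := hs.trans_le ht
    have hGle : G t ≤ G s := hGanti (Set.self_mem_Ici) ht ht
    have hcancel : t ^ (-ρ) * t ^ ρ = 1 := by
      rw [← Real.rpow_add ht0]; simp
    have htρ : (0:ℝ) < t ^ (-ρ) := Real.rpow_pos_of_pos ht0 _
    have : t ^ ρ * Q t ≤ ρ * P.eval (Real.log t) + c := by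
      simp only [hG, hc] at hGle ⊢; linarith
    have hmul := mul_le_mul_of_nonneg_left this htρ.le
    have e2 : t ^ (-ρ) * (t ^ ρ * Q t) = Q t := by
      rw [← mul_assoc, hcancel, one_mul]
    simp only [eval_add, eval_smul, eval_C, smul_eq_mul]
    linarith [hmul, e2]
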